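/- Let n ≥ 1 and N ≥ 1 be integers, and let μ be a Borel measure on ℂ^N for which there are constants C₀ > 0 and R > 0 with μ(B_ρ(w)) ≤ C₀ ρ^{2n} for every w ∈ ℂ^N and every 0 < ρ ≤ R. Let D ⊆ ℂ^N be a bounded Borel set, K ⊆ ℂ^N a compact set, 0 ≤ α ≤ 2n and 0 ≤ β < 2n. For an integer m ≥ 0 set r_m := exp(−e^m). Then there exists a constant C₃ > 0, depending only on n, N, C₀, R, α, β, K and the diameter of D, but not on m, such that for every integer m ≥ 0 and every z ∈ K with z ≠ 0 one has: ∫_{D ∩ ( B_{r_m}(0) \ closure(B_{r_{m+1}}(0)) )} dμ(ζ) / ( ‖ζ‖^α · |log ‖ζ‖| · ‖ζ − z‖^β ) ≤ C₃ if α + β ≤ 2n, and ≤ C₃ · ‖z‖^{2n − α − β} if α + β > 2n. -/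

import Mathlib

open MeasureTheory Metric Filter
open scoped NNReal ENNReal Topology

namespace TwoPoleAux

lemma exists_shell {u d ρ : ℝ} (hu0 : 0 < u) (hu1 : u < 1) (hρ : 0 < ρ)
    (hd0 : 0 < d) (hdρ : d < ρ) : ∃ k : ℕ, ρ * u ^ (k + 1) ≤ d ∧ d < ρ * u ^ k := by
  have hex : ∃ k : ℕ, ρ * u ^ (k + 1) ≤ d := by
    obtain ⟨j, hj⟩ := exists_pow_lt_of_lt_one (div_pos hd0 hρ) hu1
    refine ⟨j, ?_⟩
    have h1 : u ^ (j + 1) ≤ u ^ j := pow_le_pow_of_le_one hu0.le hu1.le (by omega)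
    have h2 : u ^ j * ρ < d := (lt_div_iff₀ hρ).mp hj
    nlinarith
  refine ⟨Nat.find hex, Nat.find_spec hex, ?_⟩
  rcases Nat.eq_zero_or_pos (Nat.find hex) with h0 | hpos
  · rw [h0]; simpa using hdρ
  · obtain ⟨j, hj⟩ := Nat.exists_eq_succ_of_ne_zero hpos.ne'
    have := Nat.find_min hex (m := j) (by omega)
    rw [hj]
    push_neg at this
    simpa using this

lemma shell_cover {E : Type*} [NormedAddCommGroup E] {u ρ : ℝ} (hu0 : 0 < u) (hu1 : u < 1)
    (hρ : 0 < ρ) (w : E) :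
    ball w ρ \ {w} ⊆ ⋃ k : ℕ, (ball w (ρ * u ^ k) \ ball w (ρ * u ^ (k + 1))) := by
  intro ζ hζ
  have hd0 : 0 < dist ζ w := dist_pos.mpr (by simpa using hζ.2)
  have hdρ : dist ζ w < ρ := mem_ball.mp hζ.1
  obtain ⟨k, hk1, hk2⟩ := exists_shell hu0 hu1 hρ hd0 hdρ
  exact Set.mem_iUnion.mpr ⟨k, mem_ball.mpr hk2, fun h => absurd (mem_ball.mp h) (not_lt.mpr hk1)⟩

lemma tsum_ofReal_geom {c q : ℝ} (hc : 0 ≤ c) (hq0 : 0 ≤ q) (hq1 : q < 1) :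
    (∑' k : ℕ, ENNReal.ofReal (c * q ^ k)) ≤ ENNReal.ofReal (c / (1 - q)) := by
  have h1 : ∀ k : ℕ, ENNReal.ofReal (c * q ^ k) = ENNReal.ofReal c * (ENNReal.ofReal q) ^ k :=
    fun k => by rw [ENNReal.ofReal_mul hc, ENNReal.ofReal_pow hq0]
  calc (∑' k : ℕ, ENNReal.ofReal (c * q ^ k))
      = ENNReal.ofReal c * ∑' k : ℕ, (ENNReal.ofReal q) ^ k := by
        rw [tsum_congr h1, ENNReal.tsum_mul_left]
    _ = ENNReal.ofReal c * (1 - ENNReal.ofReal q)⁻¹ := by rw [ENNReal.tsum_geometric]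
    _ = ENNReal.ofReal c * (ENNReal.ofReal (1 - q))⁻¹ := by
        rw [ENNReal.ofReal_sub _ hq0, ENNReal.ofReal_one]
    _ = ENNReal.ofReal c * ENNReal.ofReal (1 - q)⁻¹ := by
        rw [ENNReal.ofReal_inv_of_pos (by linarith)]
    _ = ENNReal.ofReal (c / (1 - q)) := by
        rw [← ENNReal.ofReal_mul hc, ← div_eq_mul_inv]
    _ ≤ ENNReal.ofReal (c / (1 - q)) := le_rfl


lemma singleton_null {E : Type*} [NormedAddCommGroup E] {mE : MeasurableSpace E}
    (μ : Measure E) (n : ℕ) (hn : 1 ≤ n) (C₁ : ℝ) (hC₁ : 0 < C₁)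
    (H : ∀ (w : E) (ρ : ℝ), 0 < ρ → ρ ≤ 1 →
      μ (ball w ρ) ≤ ENNReal.ofReal (C₁ * ρ ^ (2 * (n : ℝ)))) (z : E) : μ {z} = 0 := by
  have key : ∀ j : ℕ, μ {z} ≤ ENNReal.ofReal (C₁ * (1 / ((j : ℝ) + 1))) := by
    intro j
    have h01 : (0 : ℝ) < 1 / ((j : ℝ) + 1) := by positivity
    have h11 : (1 : ℝ) / ((j : ℝ) + 1) ≤ 1 := by
      rw [div_le_one (by positivity)]
      have : (0:ℝ) ≤ (j:ℝ) := Nat.cast_nonneg j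
      linarith
    have h3 : μ {z} ≤ μ (ball z (1 / ((j : ℝ) + 1))) :=
      measure_mono (by intro x hx; simp only [Set.mem_singleton_iff] at hx; subst hx
                       exact mem_ball_self h01)
    refine h3.trans ((H z _ h01 h11).trans (ENNReal.ofReal_le_ofReal ?_))
    have h4 : (1 / ((j : ℝ) + 1)) ^ (2 * (n : ℝ)) ≤ (1 / ((j : ℝ) + 1)) ^ (1 : ℝ) := by
      apply Real.rpow_le_rpow_of_exponent_ge h01 h11
      have : (1 : ℝ) ≤ (n : ℝ) := by exact_mod_cast hn
      linarith
    rw [Real.rpow_one] at h4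
    exact mul_le_mul_of_nonneg_left h4 hC₁.le
  have hT : Tendsto (fun j : ℕ => ENNReal.ofReal (C₁ * (1 / ((j : ℝ) + 1)))) atTop (𝓝 0) := by
    have h0 : Tendsto (fun j : ℕ => C₁ * (1 / ((j : ℝ) + 1))) atTop (𝓝 0) := by
      simpa using tendsto_one_div_add_atTop_nhds_zero_nat.const_mul C₁
    simpa using ENNReal.tendsto_ofReal h0
  exact le_antisymm (ge_of_tendsto' hT key) zero_le

lemma lemA {E : Type*} [NormedAddCommGroup E] (n : ℕ) (hn : 1 ≤ n)
    (C₁ : ℝ) (hC₁ : 0 < C₁) (β : ℝ) (hβ0 : 0 ≤ β) (hβ : β < 2 * n) :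
    ∃ CA : ℝ, 0 < CA ∧
      ∀ {mE : MeasurableSpace E} [BorelSpace E] (μ : Measure E),
        (∀ (w : E) (ρ : ℝ), 0 < ρ → ρ ≤ 1 →
            μ (ball w ρ) ≤ ENNReal.ofReal (C₁ * ρ ^ (2 * (n : ℝ)))) →
        ∀ (z : E) (ρ c0 : ℝ), 0 < ρ → ρ ≤ 1 → 0 ≤ c0 →
          (∫⁻ ζ in ball z ρ, ENNReal.ofReal (c0 / ‖ζ - z‖ ^ β) ∂μ) ≤
            ENNReal.ofReal (c0 * CA * ρ ^ (2 * (n : ℝ) - β)) := by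
  set q : ℝ := (2 : ℝ) ^ (β - 2 * (n : ℝ)) with hq_def
  have hq0 : 0 < q := Real.rpow_pos_of_pos two_pos _
  have hq1 : q < 1 := Real.rpow_lt_one_of_one_lt_of_neg one_lt_two (by linarith)
  have h2β : (0:ℝ) < (2:ℝ) ^ β := Real.rpow_pos_of_pos two_pos _
  refine ⟨C₁ * (2 : ℝ) ^ β / (1 - q), div_pos (by positivity) (by linarith), ?_⟩
  intro mE _ μ H z ρ c0 hρ hρ1 hc0
  have hz0 : μ {z} = 0 := singleton_null μ n hn C₁ hC₁ H z
  set u : ℝ := 1 / 2 with hu_def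
  have hu0 : (0 : ℝ) < u := by norm_num [hu_def]
  have hu1 : u < 1 := by norm_num [hu_def]
  set O : ℕ → Set E := fun k => ball z (ρ * u ^ k) \ ball z (ρ * u ^ (k + 1)) with hO_def
  have hrk : ∀ k : ℕ, 0 < ρ * u ^ k := fun k => by positivity
  have hrk1 : ∀ k : ℕ, ρ * u ^ k ≤ 1 := fun k => by
    calc ρ * u ^ k ≤ ρ * 1 := by
          apply mul_le_mul_of_nonneg_left _ hρ.le
          exact pow_le_one₀ hu0.le hu1.le
      _ ≤ 1 := by linarith
  -- per shell bound
  have shell : ∀ k : ℕ, (∫⁻ ζ in O k, ENNReal.ofReal (c0 / ‖ζ - z‖ ^ β) ∂μ) ≤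
      ENNReal.ofReal ((c0 * (C₁ * (2:ℝ) ^ β * ρ ^ (2 * (n:ℝ) - β))) * q ^ k) := by
    intro k
    have hub : ∀ ζ ∈ O k, ENNReal.ofReal (c0 / ‖ζ - z‖ ^ β) ≤
        ENNReal.ofReal (c0 / (ρ * u ^ (k + 1)) ^ β) := by
      intro ζ hζ
      apply ENNReal.ofReal_le_ofReal
      have hd : ρ * u ^ (k + 1) ≤ ‖ζ - z‖ := by
        have := hζ.2
        rw [mem_ball, not_lt, dist_eq_norm] at this
        exact this
      have hb1 : (ρ * u ^ (k + 1)) ^ β ≤ ‖ζ - z‖ ^ β :=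
        Real.rpow_le_rpow (hrk (k+1)).le hd hβ0
      have hb0 : (0:ℝ) < (ρ * u ^ (k + 1)) ^ β := Real.rpow_pos_of_pos (hrk (k+1)) _
      rw [div_eq_mul_inv, div_eq_mul_inv]
      exact mul_le_mul_of_nonneg_left (inv_anti₀ hb0 hb1) hc0
    calc (∫⁻ ζ in O k, ENNReal.ofReal (c0 / ‖ζ - z‖ ^ β) ∂μ)
        ≤ ∫⁻ _ in O k, ENNReal.ofReal (c0 / (ρ * u ^ (k + 1)) ^ β) ∂μ :=
          setLIntegral_mono' (measurableSet_ball.diff measurableSet_ball) hub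
      _ = ENNReal.ofReal (c0 / (ρ * u ^ (k + 1)) ^ β) * μ (O k) := setLIntegral_const _ _
      _ ≤ ENNReal.ofReal (c0 / (ρ * u ^ (k + 1)) ^ β) *
            ENNReal.ofReal (C₁ * (ρ * u ^ k) ^ (2 * (n:ℝ))) := by
          apply mul_le_mul_right
          exact (measure_mono Set.diff_subset).trans (H z _ (hrk k) (hrk1 k))
      _ = ENNReal.ofReal ((c0 / (ρ * u ^ (k + 1)) ^ β) * (C₁ * (ρ * u ^ k) ^ (2 * (n:ℝ)))) := by
          rw [← ENNReal.ofReal_mul (div_nonneg hc0 (Real.rpow_pos_of_pos (hrk (k+1)) β).le)]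
      _ = ENNReal.ofReal ((c0 * (C₁ * (2:ℝ) ^ β * ρ ^ (2 * (n:ℝ) - β))) * q ^ k) := by
          congr 1
          have hX : (0:ℝ) < (ρ * u ^ (k + 1)) ^ β := Real.rpow_pos_of_pos (hrk (k+1)) β
          have hY : (0:ℝ) < (ρ * u ^ k) ^ (2 * (n:ℝ)) := Real.rpow_pos_of_pos (hrk k) _
          have hP : (0:ℝ) < ρ ^ (2 * (n:ℝ) - β) := Real.rpow_pos_of_pos hρ _
          rcases eq_or_lt_of_le hc0 with h0 | hc0p
          · rw [← h0]; simp
          · have l1 : Real.log ((ρ * u ^ (k+1)) ^ β) =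
                β * (Real.log ρ + ((k:ℝ)+1) * Real.log u) := by
              rw [Real.log_rpow (hrk (k+1)), Real.log_mul hρ.ne' (by positivity), Real.log_pow]
              try push_cast
              try ring
            have l2 : Real.log ((ρ * u ^ k) ^ (2 * (n:ℝ))) =
                2 * (n:ℝ) * (Real.log ρ + (k:ℝ) * Real.log u) := by
              rw [Real.log_rpow (hrk k), Real.log_mul hρ.ne' (by positivity), Real.log_pow]
              try push_cast
              try ring
            have l3 : Real.log u = -Real.log 2 := by rw [hu_def, one_div, Real.log_inv]
            have eL : Real.log ((c0 / (ρ * u ^ (k + 1)) ^ β) * (C₁ * (ρ * u ^ k) ^ (2 * (n:ℝ))))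
                = Real.log c0 + Real.log C₁ + (2 * (n:ℝ) - β) * Real.log ρ +
                  (β * ((k:ℝ)+1) - 2 * (n:ℝ) * (k:ℝ)) * Real.log 2 := by
              rw [Real.log_mul (by positivity) (by positivity),
                  Real.log_div hc0p.ne' hX.ne', l1,
                  Real.log_mul hC₁.ne' hY.ne', l2, l3]
              ring
            have eR : Real.log ((c0 * (C₁ * (2:ℝ) ^ β * ρ ^ (2 * (n:ℝ) - β))) * q ^ k)
                = Real.log c0 + Real.log C₁ + (2 * (n:ℝ) - β) * Real.log ρ +
                  (β * ((k:ℝ)+1) - 2 * (n:ℝ) * (k:ℝ)) * Real.log 2 := by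
              rw [Real.log_mul (by positivity) (by positivity), Real.log_pow, hq_def,
                  Real.log_rpow two_pos,
                  Real.log_mul hc0p.ne' (by positivity),
                  Real.log_mul (by positivity) hP.ne',
                  Real.log_mul hC₁.ne' (by positivity),
                  Real.log_rpow two_pos, Real.log_rpow hρ]
              ring
            have hL : (0:ℝ) < (c0 / (ρ * u ^ (k + 1)) ^ β) * (C₁ * (ρ * u ^ k) ^ (2 * (n:ℝ))) := by
              positivity
            have hR : (0:ℝ) < (c0 * (C₁ * (2:ℝ) ^ β * ρ ^ (2 * (n:ℝ) - β))) * q ^ k := by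
              positivity
            exact Real.log_injOn_pos (Set.mem_Ioi.mpr hL) (Set.mem_Ioi.mpr hR) (eL.trans eR.symm)
  -- assemble
  calc (∫⁻ ζ in ball z ρ, ENNReal.ofReal (c0 / ‖ζ - z‖ ^ β) ∂μ)
      ≤ ∫⁻ ζ in (ball z ρ \ {z}) ∪ {z}, ENNReal.ofReal (c0 / ‖ζ - z‖ ^ β) ∂μ := by
        apply lintegral_mono_set
        intro x hx
        by_cases hxz : x = z
        · exact Or.inr (by simp [hxz])
        · exact Or.inl ⟨hx, by simp [hxz]⟩
    _ ≤ (∫⁻ ζ in ball z ρ \ {z}, ENNReal.ofReal (c0 / ‖ζ - z‖ ^ β) ∂μ) +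
          ∫⁻ ζ in {z}, ENNReal.ofReal (c0 / ‖ζ - z‖ ^ β) ∂μ := lintegral_union_le _ _ _
    _ = ∫⁻ ζ in ball z ρ \ {z}, ENNReal.ofReal (c0 / ‖ζ - z‖ ^ β) ∂μ := by
        rw [setLIntegral_measure_zero _ _ hz0, add_zero]
    _ ≤ ∫⁻ ζ in ⋃ k : ℕ, O k, ENNReal.ofReal (c0 / ‖ζ - z‖ ^ β) ∂μ :=
        lintegral_mono_set (shell_cover hu0 hu1 hρ z)
    _ ≤ ∑' k : ℕ, ∫⁻ ζ in O k, ENNReal.ofReal (c0 / ‖ζ - z‖ ^ β) ∂μ := lintegral_iUnion_le _ _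
    _ ≤ ∑' k : ℕ, ENNReal.ofReal ((c0 * (C₁ * (2:ℝ) ^ β * ρ ^ (2 * (n:ℝ) - β))) * q ^ k) :=
        ENNReal.tsum_le_tsum shell
    _ ≤ ENNReal.ofReal ((c0 * (C₁ * (2:ℝ) ^ β * ρ ^ (2 * (n:ℝ) - β))) / (1 - q)) := by
        apply tsum_ofReal_geom _ hq0.le hq1
        have := Real.rpow_pos_of_pos hρ (2 * (n:ℝ) - β)
        positivity
    _ ≤ ENNReal.ofReal (c0 * (C₁ * (2 : ℝ) ^ β / (1 - q)) * ρ ^ (2 * (n : ℝ) - β)) := by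
        apply ENNReal.ofReal_le_ofReal
        rw [div_eq_mul_inv, div_eq_mul_inv]
        ring_nf
        exact le_rfl

lemma one_div_mul_le_left {X Y c : ℝ} (hY : 0 ≤ Y) (hc : 0 < c) (hX : c ≤ X) :
    1 / (X * Y) ≤ (1 / c) / Y := by
  rcases eq_or_lt_of_le hY with h0 | hY0
  · rw [← h0]; simp
  · have h1 : 1 / (X * Y) ≤ 1 / (c * Y) :=
      one_div_le_one_div_of_le (by positivity) (mul_le_mul_of_nonneg_right hX hY0.le)
    calc 1 / (X * Y) ≤ 1 / (c * Y) := h1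
      _ = (1 / c) / Y := by rw [div_div]

lemma one_div_mul_le_right {X Y c : ℝ} (hX : 0 < X) (hc : 0 < c) (hY : c ≤ Y) :
    1 / (X * Y) ≤ (1 / c) / X := by
  have h1 : 1 / (X * Y) ≤ 1 / (X * c) :=
    one_div_le_one_div_of_le (by positivity) (mul_le_mul_of_nonneg_left hY hX.le)
  calc 1 / (X * Y) ≤ 1 / (X * c) := h1
    _ = (1 / c) / X := by rw [div_div, mul_comm]

lemma lemB {E : Type*} [NormedAddCommGroup E] (n : ℕ) (hn : 1 ≤ n)
    (C₁ : ℝ) (hC₁ : 0 < C₁) (t : ℝ) (ht0 : 0 ≤ t) (ht : t ≤ 2 * n) :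
    ∀ {mE : MeasurableSpace E} [BorelSpace E] (μ : Measure E),
        (∀ (w : E) (ρ : ℝ), 0 < ρ → ρ ≤ 1 →
            μ (ball w ρ) ≤ ENNReal.ofReal (C₁ * ρ ^ (2 * (n : ℝ)))) →
        ∀ (m : ℕ) (ρb c0 : ℝ), 0 ≤ c0 → 0 < ρb → ρb ≤ Real.exp (-Real.exp (m : ℝ)) →
          (∫⁻ ζ in (ball (0 : E) (Real.exp (-Real.exp (m : ℝ))) \
              closedBall (0 : E) (Real.exp (-Real.exp ((m : ℝ) + 1)))) ∩ ball (0 : E) ρb,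
            ENNReal.ofReal (c0 / (‖ζ‖ ^ t * |Real.log ‖ζ‖|)) ∂μ) ≤
            ENNReal.ofReal (c0 * (C₁ * Real.exp (2 * (n : ℝ)) * (Real.exp 1 + 1)) *
              ρb ^ (2 * (n : ℝ) - t)) := by
  intro mE _ μ H m ρb c0 hc0 hρb hρbm
  set rm : ℝ := Real.exp (-Real.exp (m : ℝ)) with hrm_def
  set rm1 : ℝ := Real.exp (-Real.exp ((m : ℝ) + 1)) with hrm1_def
  set A : Set E := ball (0 : E) rm \ closedBall (0 : E) rm1 with hA_def
  set u : ℝ := Real.exp (-1) with hu_def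
  have hu0 : (0:ℝ) < u := Real.exp_pos _
  have hu1 : u < 1 := by
    have : Real.exp (-1) < Real.exp 0 := Real.exp_lt_exp.mpr (by norm_num)
    simpa [hu_def] using this
  have hrm1lt : rm ≤ Real.exp (-1) := by
    apply Real.exp_le_exp.mpr
    have : (1:ℝ) ≤ Real.exp (m : ℝ) := Real.one_le_exp (by positivity)
    linarith
  have hrmlt1 : rm < 1 := lt_of_le_of_lt hrm1lt (by simpa using hu1)
  have hρb1 : ρb ≤ 1 := hρbm.trans hrmlt1.le
  set O : ℕ → Set E := fun k => ball (0:E) (ρb * u ^ k) \ ball (0:E) (ρb * u ^ (k + 1))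
    with hO_def
  have hrk : ∀ k : ℕ, 0 < ρb * u ^ k := fun k => by positivity
  have hrk1 : ∀ k : ℕ, ρb * u ^ k ≤ 1 := fun k => by
    calc ρb * u ^ k ≤ ρb * 1 :=
          mul_le_mul_of_nonneg_left (pow_le_one₀ hu0.le hu1.le) hρb.le
      _ ≤ 1 := by linarith
  have hupow : ∀ k : ℕ, (u : ℝ) ^ k = Real.exp (-(k:ℝ)) := by
    intro k
    rw [hu_def, ← Real.exp_nat_mul]
    norm_num
  set K : ℕ := Nat.ceil (Real.exp ((m:ℝ) + 1)) with hK_def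
  set c' : ℝ := c0 * C₁ * ρb ^ (2 * (n:ℝ) - t) * Real.exp (2 * (n:ℝ)) * Real.exp (-(m:ℝ))
    with hc'_def
  have hc'0 : 0 ≤ c' := by
    have := Real.rpow_pos_of_pos hρb (2 * (n:ℝ) - t)
    positivity
  -- shells are empty beyond K
  have hempty : ∀ k : ℕ, K ≤ k → O k ∩ A = ∅ := by
    intro k hk
    rw [Set.eq_empty_iff_forall_notMem]
    rintro ζ ⟨hO, hA1, hA2⟩
    have h1 : ‖ζ‖ < ρb * u ^ k := by
      have := hO.1; rwa [mem_ball, dist_zero_right] at this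
    have h2 : rm1 < ‖ζ‖ := by
      rw [mem_closedBall, dist_zero_right, not_le] at hA2
      exact hA2
    have h3 : ρb * u ^ k ≤ rm1 := by
      rw [hupow, hrm1_def]
      calc ρb * Real.exp (-(k:ℝ)) ≤ rm * Real.exp (-(k:ℝ)) :=
            mul_le_mul_of_nonneg_right hρbm (Real.exp_pos _).le
        _ = Real.exp (-Real.exp (m:ℝ) - (k:ℝ)) := by rw [hrm_def, ← Real.exp_add]; ring_nf
        _ ≤ Real.exp (-Real.exp ((m:ℝ) + 1)) := by
            apply Real.exp_le_exp.mpr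
            have hKk : Real.exp ((m:ℝ) + 1) ≤ (k:ℝ) := by
              have h4 : (K:ℝ) ≤ (k:ℝ) := by exact_mod_cast hk
              exact (Nat.le_ceil _).trans h4
            have hem : (0:ℝ) < Real.exp (m:ℝ) := Real.exp_pos _
            linarith
    linarith
  -- per-shell estimate
  have shell : ∀ k : ℕ, (∫⁻ ζ in O k ∩ A, ENNReal.ofReal (c0 / (‖ζ‖ ^ t * |Real.log ‖ζ‖|)) ∂μ)
      ≤ ENNReal.ofReal c' := by
    intro k
    have hXpos : (0:ℝ) < (ρb * u ^ (k+1)) ^ t := Real.rpow_pos_of_pos (hrk (k+1)) t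
    have hEm : (0:ℝ) < Real.exp (m:ℝ) := Real.exp_pos _
    have hub : ∀ ζ ∈ O k ∩ A, ENNReal.ofReal (c0 / (‖ζ‖ ^ t * |Real.log ‖ζ‖|)) ≤
        ENNReal.ofReal (c0 / ((ρb * u ^ (k+1)) ^ t * Real.exp (m:ℝ))) := by
      rintro ζ ⟨hO, hA1, _⟩
      apply ENNReal.ofReal_le_ofReal
      have hd : ρb * u ^ (k + 1) ≤ ‖ζ‖ := by
        have := hO.2; rw [mem_ball, dist_zero_right, not_lt] at this; exact this
      have hζ0 : (0:ℝ) < ‖ζ‖ := lt_of_lt_of_le (hrk (k+1)) hd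
      have hζrm : ‖ζ‖ < rm := by
        have := hA1; rwa [mem_ball, dist_zero_right] at this
      have hlog : Real.exp (m:ℝ) ≤ |Real.log ‖ζ‖| := by
        have h5 : Real.log ‖ζ‖ < Real.log rm := Real.log_lt_log hζ0 hζrm
        rw [hrm_def, Real.log_exp] at h5
        calc Real.exp (m:ℝ) ≤ -Real.log ‖ζ‖ := by linarith
          _ ≤ |Real.log ‖ζ‖| := neg_le_abs _
      have hrp : (ρb * u ^ (k+1)) ^ t ≤ ‖ζ‖ ^ t := Real.rpow_le_rpow (hrk (k+1)).le hd ht0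
      have hden : (ρb * u ^ (k+1)) ^ t * Real.exp (m:ℝ) ≤ ‖ζ‖ ^ t * |Real.log ‖ζ‖| :=
        mul_le_mul hrp hlog hEm.le (Real.rpow_pos_of_pos hζ0 t).le
      rw [div_eq_mul_inv, div_eq_mul_inv]
      exact mul_le_mul_of_nonneg_left (inv_anti₀ (by positivity) hden) hc0
    calc (∫⁻ ζ in O k ∩ A, ENNReal.ofReal (c0 / (‖ζ‖ ^ t * |Real.log ‖ζ‖|)) ∂μ)
        ≤ ∫⁻ _ in O k ∩ A, ENNReal.ofReal (c0 / ((ρb * u ^ (k+1)) ^ t * Real.exp (m:ℝ))) ∂μ :=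
          setLIntegral_mono' ((measurableSet_ball.diff measurableSet_ball).inter
            (measurableSet_ball.diff measurableSet_closedBall)) hub
      _ = ENNReal.ofReal (c0 / ((ρb * u ^ (k+1)) ^ t * Real.exp (m:ℝ))) * μ (O k ∩ A) :=
          setLIntegral_const _ _
      _ ≤ ENNReal.ofReal (c0 / ((ρb * u ^ (k+1)) ^ t * Real.exp (m:ℝ))) *
            ENNReal.ofReal (C₁ * (ρb * u ^ k) ^ (2 * (n:ℝ))) := by
          apply mul_le_mul_right
          refine (measure_mono ?_).trans (H 0 _ (hrk k) (hrk1 k))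
          exact Set.inter_subset_left.trans Set.diff_subset
      _ = ENNReal.ofReal ((c0 / ((ρb * u ^ (k+1)) ^ t * Real.exp (m:ℝ))) *
              (C₁ * (ρb * u ^ k) ^ (2 * (n:ℝ)))) := by
          rw [← ENNReal.ofReal_mul (div_nonneg hc0 (by positivity))]
      _ ≤ ENNReal.ofReal c' := by
          apply ENNReal.ofReal_le_ofReal
          rcases eq_or_lt_of_le hc0 with h0 | hc0p
          · rw [← h0]; simpa using hc'0
          have heq : (c0 / ((ρb * u ^ (k+1)) ^ t * Real.exp (m:ℝ))) *
              (C₁ * (ρb * u ^ k) ^ (2 * (n:ℝ))) =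
              c0 * C₁ * ρb ^ (2 * (n:ℝ) - t) *
                Real.exp (t - (k:ℝ) * (2 * (n:ℝ) - t)) * Real.exp (-(m:ℝ)) := by
            have hY : (0:ℝ) < (ρb * u ^ k) ^ (2 * (n:ℝ)) := Real.rpow_pos_of_pos (hrk k) _
            have hP : (0:ℝ) < ρb ^ (2 * (n:ℝ) - t) := Real.rpow_pos_of_pos hρb _
            have l1 : Real.log ((ρb * u ^ (k+1)) ^ t) =
                t * (Real.log ρb - ((k:ℝ)+1)) := by
              rw [Real.log_rpow (hrk (k+1)), Real.log_mul hρb.ne' (by positivity),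
                Real.log_pow, hu_def, Real.log_exp]
              push_cast; ring
            have l2 : Real.log ((ρb * u ^ k) ^ (2 * (n:ℝ))) =
                2 * (n:ℝ) * (Real.log ρb - (k:ℝ)) := by
              rw [Real.log_rpow (hrk k), Real.log_mul hρb.ne' (by positivity),
                Real.log_pow, hu_def, Real.log_exp]
              push_cast; ring
            have hL : (0:ℝ) < (c0 / ((ρb * u ^ (k+1)) ^ t * Real.exp (m:ℝ))) *
                (C₁ * (ρb * u ^ k) ^ (2 * (n:ℝ))) := by positivity
            have hR : (0:ℝ) < c0 * C₁ * ρb ^ (2 * (n:ℝ) - t) *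
                Real.exp (t - (k:ℝ) * (2 * (n:ℝ) - t)) * Real.exp (-(m:ℝ)) := by positivity
            apply Real.log_injOn_pos (Set.mem_Ioi.mpr hL) (Set.mem_Ioi.mpr hR)
            rw [Real.log_mul (by positivity) (by positivity),
              Real.log_div hc0p.ne' (by positivity),
              Real.log_mul hXpos.ne' hEm.ne', Real.log_exp,
              Real.log_mul hC₁.ne' hY.ne', l1, l2,
              Real.log_mul (by positivity) (Real.exp_pos _).ne',
              Real.log_mul (by positivity) (Real.exp_pos _).ne',
              Real.log_mul (by positivity) hP.ne',
              Real.log_mul hc0p.ne' hC₁.ne',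
              Real.log_rpow hρb, Real.log_exp, Real.log_exp]
            ring
          rw [heq, hc'_def]
          have hexp : Real.exp (t - (k:ℝ) * (2 * (n:ℝ) - t)) ≤ Real.exp (2 * (n:ℝ)) := by
            apply Real.exp_le_exp.mpr
            have h6 : (0:ℝ) ≤ (k:ℝ) * (2 * (n:ℝ) - t) := by
              apply mul_nonneg (Nat.cast_nonneg k)
              linarith
            linarith
          have hP : (0:ℝ) < ρb ^ (2 * (n:ℝ) - t) := Real.rpow_pos_of_pos hρb _
          calc c0 * C₁ * ρb ^ (2 * (n:ℝ) - t) * Real.exp (t - (k:ℝ) * (2 * (n:ℝ) - t)) *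
                Real.exp (-(m:ℝ))
              ≤ c0 * C₁ * ρb ^ (2 * (n:ℝ) - t) * Real.exp (2 * (n:ℝ)) * Real.exp (-(m:ℝ)) := by
                apply mul_le_mul_of_nonneg_right _ (Real.exp_pos _).le
                apply mul_le_mul_of_nonneg_left hexp
                positivity
            _ = c0 * C₁ * ρb ^ (2 * (n:ℝ) - t) * Real.exp (2 * (n:ℝ)) * Real.exp (-(m:ℝ)) := rfl
  -- assemble
  have hcover : A ∩ ball (0:E) ρb ⊆ ⋃ k : ℕ, (O k ∩ A) := by
    rintro ζ ⟨hζA, hζb⟩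
    have h0A : ζ ≠ 0 := by
      rintro rfl
      exact hζA.2 (by simp [mem_closedBall, hrm1_def, (Real.exp_pos _).le, Real.exp_nonneg])
    have hmem : ζ ∈ ball (0:E) ρb \ {0} := ⟨hζb, by simp [h0A]⟩
    have := shell_cover hu0 hu1 hρb (0:E) hmem
    obtain ⟨k, hk⟩ := Set.mem_iUnion.mp this
    exact Set.mem_iUnion.mpr ⟨k, hk, hζA⟩
  calc (∫⁻ ζ in A ∩ ball (0:E) ρb, ENNReal.ofReal (c0 / (‖ζ‖ ^ t * |Real.log ‖ζ‖|)) ∂μ)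
      ≤ ∫⁻ ζ in ⋃ k : ℕ, (O k ∩ A), ENNReal.ofReal (c0 / (‖ζ‖ ^ t * |Real.log ‖ζ‖|)) ∂μ :=
        lintegral_mono_set hcover
    _ ≤ ∑' k : ℕ, ∫⁻ ζ in O k ∩ A, ENNReal.ofReal (c0 / (‖ζ‖ ^ t * |Real.log ‖ζ‖|)) ∂μ :=
        lintegral_iUnion_le _ _
    _ = ∑ k ∈ Finset.range K, ∫⁻ ζ in O k ∩ A,
          ENNReal.ofReal (c0 / (‖ζ‖ ^ t * |Real.log ‖ζ‖|)) ∂μ := by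
        apply tsum_eq_sum
        intro k hk
        rw [hempty k (Nat.le_of_not_lt (by simpa using hk))]
        simp
    _ ≤ ∑ k ∈ Finset.range K, ENNReal.ofReal c' :=
        Finset.sum_le_sum fun k _ => shell k
    _ = (K : ℝ≥0∞) * ENNReal.ofReal c' := by
        rw [Finset.sum_const, Finset.card_range, nsmul_eq_mul]
    _ = ENNReal.ofReal ((K:ℝ) * c') := by
        rw [ENNReal.ofReal_mul (Nat.cast_nonneg K), ENNReal.ofReal_natCast]
    _ ≤ ENNReal.ofReal (c0 * (C₁ * Real.exp (2 * (n : ℝ)) * (Real.exp 1 + 1)) *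
          ρb ^ (2 * (n : ℝ) - t)) := by
        apply ENNReal.ofReal_le_ofReal
        have hKle : (K:ℝ) ≤ Real.exp ((m:ℝ)+1) + 1 :=
          le_of_lt (Nat.ceil_lt_add_one (Real.exp_pos _).le)
        have hP : (0:ℝ) < ρb ^ (2 * (n:ℝ) - t) := Real.rpow_pos_of_pos hρb _
        have key : (Real.exp ((m:ℝ)+1) + 1) * Real.exp (-(m:ℝ)) ≤ Real.exp 1 + 1 := by
          have h7 : Real.exp ((m:ℝ)+1) * Real.exp (-(m:ℝ)) = Real.exp 1 := by
            rw [← Real.exp_add]; ring_nf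
          have h8 : Real.exp (-(m:ℝ)) ≤ 1 := by
            rw [Real.exp_le_one_iff]
            simp [Nat.cast_nonneg]
          nlinarith [Real.exp_pos (-(m:ℝ))]
        have hKc : (K:ℝ) * c' ≤ (Real.exp ((m:ℝ)+1) + 1) * c' :=
          mul_le_mul_of_nonneg_right hKle hc'0
        rw [hc'_def] at hKc ⊢
        calc (K:ℝ) * (c0 * C₁ * ρb ^ (2 * (n:ℝ) - t) * Real.exp (2 * (n:ℝ)) *
              Real.exp (-(m:ℝ))) ≤ (Real.exp ((m:ℝ)+1) + 1) *
              (c0 * C₁ * ρb ^ (2 * (n:ℝ) - t) * Real.exp (2 * (n:ℝ)) * Real.exp (-(m:ℝ))) := hKc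
          _ ≤ c0 * (C₁ * Real.exp (2 * (n : ℝ)) * (Real.exp 1 + 1)) * ρb ^ (2 * (n:ℝ) - t) := by
              nlinarith [Real.exp_pos (2*(n:ℝ)), Real.exp_pos ((m:ℝ)+1), Real.exp_pos (-(m:ℝ)),
                Real.exp_pos (1:ℝ), hP, hc0, hC₁.le, key]

lemma ahlfors_extend {E : Type*} [NormedAddCommGroup E] [ProperSpace E]
    (n : ℕ) (hn : 1 ≤ n) (C₀ R : ℝ) (hC₀ : 0 < C₀) (hR : 0 < R) :
    ∃ C₁ : ℝ, 0 < C₁ ∧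
      ∀ {mE : MeasurableSpace E} [BorelSpace E] (μ : Measure E),
        (∀ (w : E) (ρ : ℝ), 0 < ρ → ρ ≤ R →
            μ (ball w ρ) ≤ ENNReal.ofReal (C₀ * ρ ^ (2 * n))) →
        ∀ (w : E) (ρ : ℝ), 0 < ρ → ρ ≤ 1 →
          μ (ball w ρ) ≤ ENNReal.ofReal (C₁ * ρ ^ (2 * (n : ℝ))) := by
  set R' : ℝ := min R 1 with hR'_def
  have hR'0 : 0 < R' := lt_min hR one_pos
  have hR'R : R' ≤ R := min_le_left _ _
  have hR'1 : R' ≤ 1 := min_le_right _ _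
  obtain ⟨s, hsfin, hscov⟩ := (Metric.totallyBounded_iff.mp
    (isCompact_closedBall (0 : E) 1).totallyBounded) R' hR'0
  set T : Finset E := hsfin.toFinset with hT_def
  set M : ℕ := T.card with hM_def
  refine ⟨C₀ * (M + 1), by positivity, ?_⟩
  intro mE _ μ hμ w ρ hρ hρ1
  have hcast : ∀ x : ℝ, 0 < x → x ^ (2 * (n : ℝ)) = x ^ (2 * n) := by
    intro x hx
    rw [← Real.rpow_natCast x (2 * n)]
    push_cast; ring_nf
  have hM0 : (0:ℝ) ≤ (M : ℝ) := Nat.cast_nonneg M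
  have hM1 : (1 : ℝ) ≤ (M : ℝ) + 1 := by linarith
  by_cases hρR : ρ ≤ R'
  · refine (hμ w ρ hρ (hρR.trans hR'R)).trans (ENNReal.ofReal_le_ofReal ?_)
    rw [hcast ρ hρ]
    have h2 : (0:ℝ) ≤ ρ ^ (2 * n) := by positivity
    have h3 : C₀ ≤ C₀ * ((M:ℝ) + 1) := by nlinarith
    calc C₀ * ρ ^ (2*n) ≤ (C₀ * ((M:ℝ)+1)) * ρ ^ (2*n) :=
          mul_le_mul_of_nonneg_right h3 h2
      _ = C₀ * ((M:ℝ)+1) * ρ ^ (2*n) := by ring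
  · push_neg at hρR
    have hcov2 : ball w ρ ⊆ ⋃ y ∈ T, ball (w + y) R' := by
      intro ζ hζ
      have h1 : ζ - w ∈ closedBall (0 : E) 1 := by
        rw [mem_closedBall, dist_zero_right]
        have := mem_ball.mp hζ
        rw [dist_eq_norm] at this
        linarith
      obtain ⟨y, hy, hy2⟩ := Set.mem_iUnion₂.mp (hscov h1)
      refine Set.mem_iUnion₂.mpr ⟨y, hsfin.mem_toFinset.mpr hy, ?_⟩
      rw [mem_ball, dist_eq_norm]
      have := mem_ball.mp hy2
      rw [dist_eq_norm] at this
      have heq : ζ - w - y = ζ - (w + y) := by abel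
      rwa [heq] at this
    calc μ (ball w ρ) ≤ ∑ y ∈ T, μ (ball (w + y) R') :=
          (measure_mono hcov2).trans (measure_biUnion_finset_le _ _)
      _ ≤ ∑ _y ∈ T, ENNReal.ofReal (C₀ * R' ^ (2 * n)) :=
          Finset.sum_le_sum fun y _ => hμ _ _ hR'0 hR'R
      _ = (M : ℝ≥0∞) * ENNReal.ofReal (C₀ * R' ^ (2 * n)) := by
          rw [Finset.sum_const, nsmul_eq_mul, hM_def]
      _ = ENNReal.ofReal ((M : ℝ) * (C₀ * R' ^ (2 * n))) := by
          rw [ENNReal.ofReal_mul (Nat.cast_nonneg M), ENNReal.ofReal_natCast]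
      _ ≤ ENNReal.ofReal (C₀ * (M + 1) * ρ ^ (2 * (n : ℝ))) := by
          apply ENNReal.ofReal_le_ofReal
          rw [hcast ρ hρ]
          have h3 : R' ^ (2 * n) ≤ ρ ^ (2 * n) :=
            pow_le_pow_left₀ hR'0.le hρR.le _
          have h6 : (0:ℝ) < ρ ^ (2 * n) := by positivity
          have h7 : (M:ℝ) * (C₀ * R' ^ (2*n)) ≤ (M:ℝ) * (C₀ * ρ ^ (2*n)) :=
            mul_le_mul_of_nonneg_left (mul_le_mul_of_nonneg_left h3 hC₀.le) hM0
          nlinarith [mul_pos hC₀ h6]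

end TwoPoleAux

set_option maxHeartbeats 2000000 in
open TwoPoleAux in
/-- The refined two-pole estimate with logarithmic weight over the annuli
`B_{r_m}(0) \ closure (B_{r_{m+1}}(0))`, `r_m = exp (−e^m)`, uniform in `m`,
for a measure with an upper Ahlfors regularity bound of exponent `2n`. -/
theorem two_pole_log_annulus_estimate
    (n N : ℕ) (hn : 1 ≤ n) (hN : 1 ≤ N) (C₀ R : ℝ) (hC₀ : 0 < C₀) (hR : 0 < R)
    (α β : ℝ) (hα : 0 ≤ α) (hα' : α ≤ 2 * n) (hβ : 0 ≤ β) (hβ' : β < 2 * n)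
    (d₀ : ℝ) (hd₀ : 0 < d₀) (K : Set (EuclideanSpace ℂ (Fin N))) (hK : IsCompact K) :
    ∃ C₃ : ℝ, 0 < C₃ ∧
      ∀ [MeasurableSpace (EuclideanSpace ℂ (Fin N))]
        [BorelSpace (EuclideanSpace ℂ (Fin N))]
        (μ : Measure (EuclideanSpace ℂ (Fin N))),
        (∀ (w : EuclideanSpace ℂ (Fin N)) (ρ : ℝ), 0 < ρ → ρ ≤ R →
          μ (ball w ρ) ≤ ENNReal.ofReal (C₀ * ρ ^ (2 * n))) →
        ∀ D : Set (EuclideanSpace ℂ (Fin N)), MeasurableSet D → Bornology.IsBounded D →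
          Metric.diam D ≤ d₀ →
          ∀ (m : ℕ), ∀ z ∈ K, z ≠ 0 →
            (α + β ≤ 2 * n →
              (∫⁻ ζ in D ∩ (ball (0 : EuclideanSpace ℂ (Fin N)) (Real.exp (-Real.exp m)) \
                    closedBall (0 : EuclideanSpace ℂ (Fin N)) (Real.exp (-Real.exp (m + 1)))),
                  ENNReal.ofReal
                    (1 / (‖ζ‖ ^ α * |Real.log ‖ζ‖| * ‖ζ - z‖ ^ β)) ∂μ) ≤
                ENNReal.ofReal C₃) ∧
            (2 * n < α + β →
              (∫⁻ ζ in D ∩ (ball (0 : EuclideanSpace ℂ (Fin N)) (Real.exp (-Real.exp m)) \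
                    closedBall (0 : EuclideanSpace ℂ (Fin N)) (Real.exp (-Real.exp (m + 1)))),
                  ENNReal.ofReal
                    (1 / (‖ζ‖ ^ α * |Real.log ‖ζ‖| * ‖ζ - z‖ ^ β)) ∂μ) ≤
                ENNReal.ofReal (C₃ * ‖z‖ ^ (2 * n - α - β))) := by
  classical
  obtain ⟨B, hBK⟩ := hK.isBounded.subset_closedBall 0
  set Bm : ℝ := max 1 B with hBm_def
  have hBm1 : (1:ℝ) ≤ Bm := le_max_left _ _
  have hBm0 : (0:ℝ) < Bm := lt_of_lt_of_le one_pos hBm1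
  obtain ⟨C₁, hC₁0, hH1⟩ :=
    ahlfors_extend (E := EuclideanSpace ℂ (Fin N)) n hn C₀ R hC₀ hR
  obtain ⟨CA, hCA0, hCA⟩ :=
    lemA (E := EuclideanSpace ℂ (Fin N)) n hn C₁ hC₁0 β hβ hβ'
  set CB : ℝ := C₁ * Real.exp (2 * (n:ℝ)) * (Real.exp 1 + 1) with hCB_def
  have hCB0 : 0 < CB := by positivity
  have h32 : (0:ℝ) < (3/2:ℝ) ^ α := Real.rpow_pos_of_pos (by norm_num) α
  have h2β : (0:ℝ) < (2:ℝ) ^ β := Real.rpow_pos_of_pos two_pos β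
  have h22n : (0:ℝ) < (2:ℝ) ^ (2*(n:ℝ)) := Real.rpow_pos_of_pos two_pos _
  rcases le_or_gt (α + β) (2 * (n:ℝ)) with hcase | hcase
  case inl =>
    refine ⟨(3/2:ℝ)^α * CA * Bm ^ (2*(n:ℝ)) + (2:ℝ)^β * CB, by positivity, ?_⟩
    intro mE bE μ hμ D hD hDb hDd m z hzK hzne
    have H1 := hH1 μ hμ
    have hz0 : (0:ℝ) < ‖z‖ := norm_pos_iff.mpr hzne
    have hzBm : ‖z‖ ≤ Bm := by
      have := hBK hzK
      rw [mem_closedBall, dist_zero_right] at this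
      exact this.trans (le_max_right _ _)
    set rm : ℝ := Real.exp (-Real.exp (m : ℝ)) with hrm_def
    set rm1 : ℝ := Real.exp (-Real.exp ((m : ℝ) + 1)) with hrm1_def
    set A : Set (EuclideanSpace ℂ (Fin N)) := ball 0 rm \ closedBall 0 rm1 with hA_def
    have hrm0 : 0 < rm := Real.exp_pos _
    have hrmlt1 : rm < 1 := by
      rw [hrm_def, ← Real.exp_zero]
      apply Real.exp_lt_exp.mpr
      have : (1:ℝ) ≤ Real.exp (m:ℝ) := Real.one_le_exp (Nat.cast_nonneg m)
      linarith
    have hAfact : ∀ ζ ∈ A, 0 < ‖ζ‖ ∧ ‖ζ‖ < rm ∧ 1 ≤ |Real.log ‖ζ‖| := by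
      intro ζ hζ
      have h1 : rm1 < ‖ζ‖ := by
        have := hζ.2; rwa [mem_closedBall, dist_zero_right, not_le] at this
      have h2 : ‖ζ‖ < rm := by
        have := hζ.1; rwa [mem_ball, dist_zero_right] at this
      have h0 : 0 < ‖ζ‖ := (Real.exp_pos _).trans h1
      have hem : (1:ℝ) ≤ Real.exp (m:ℝ) := Real.one_le_exp (Nat.cast_nonneg m)
      have hlog : Real.log ‖ζ‖ < -Real.exp (m:ℝ) := by
        have := Real.log_lt_log h0 h2
        rwa [hrm_def, Real.log_exp] at this
      refine ⟨h0, h2, ?_⟩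
      calc (1:ℝ) ≤ Real.exp (m:ℝ) := hem
        _ ≤ -Real.log ‖ζ‖ := by linarith
        _ ≤ |Real.log ‖ζ‖| := neg_le_abs _
    set S : Set (EuclideanSpace ℂ (Fin N)) := {ζ | ‖ζ - z‖ < ‖ζ‖ / 2} with hS_def
    have hSm : MeasurableSet S :=
      measurableSet_lt ((continuous_id.sub continuous_const).norm.measurable)
        (continuous_norm.measurable.div_const 2)
    have hAm : MeasurableSet A := measurableSet_ball.diff measurableSet_closedBall
    -- Region R1
    have hR1 : (∫⁻ ζ in S ∩ A,
        ENNReal.ofReal (1 / (‖ζ‖ ^ α * |Real.log ‖ζ‖| * ‖ζ - z‖ ^ β)) ∂μ) ≤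
        ENNReal.ofReal ((3/2:ℝ)^α * CA * ‖z‖ ^ (2*(n:ℝ) - α - β)) := by
      set c0 : ℝ := (((2/3:ℝ) * ‖z‖) ^ α)⁻¹ with hc0_def
      have h23 : (0:ℝ) < (2/3:ℝ) * ‖z‖ := by positivity
      have h23α : (0:ℝ) < ((2/3:ℝ) * ‖z‖) ^ α := Real.rpow_pos_of_pos h23 α
      have hc0p : 0 < c0 := by rw [hc0_def]; positivity
      have hpt : ∀ ζ ∈ S ∩ A,
          ENNReal.ofReal (1 / (‖ζ‖ ^ α * |Real.log ‖ζ‖| * ‖ζ - z‖ ^ β)) ≤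
          ENNReal.ofReal (c0 / ‖ζ - z‖ ^ β) := by
        rintro ζ ⟨hζS, hζA⟩
        obtain ⟨ha0, harm, hL1⟩ := hAfact ζ hζA
        apply ENNReal.ofReal_le_ofReal
        have hb : ‖ζ - z‖ < ‖ζ‖ / 2 := hζS
        have htr : ‖z‖ ≤ ‖ζ‖ + ‖ζ - z‖ := by
          have := norm_sub_le ζ (ζ - z)
          simpa using this
        have hza : (2/3:ℝ) * ‖z‖ < ‖ζ‖ := by linarith
        have hXc : ((2/3:ℝ)*‖z‖)^α ≤ ‖ζ‖^α * |Real.log ‖ζ‖| := by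
          have h1 : ((2/3:ℝ)*‖z‖)^α ≤ ‖ζ‖^α := Real.rpow_le_rpow h23.le hza.le hα
          calc ((2/3:ℝ)*‖z‖)^α ≤ ‖ζ‖^α := h1
            _ = ‖ζ‖^α * 1 := (mul_one _).symm
            _ ≤ ‖ζ‖^α * |Real.log ‖ζ‖| :=
                mul_le_mul_of_nonneg_left hL1 (Real.rpow_pos_of_pos ha0 α).le
        have h2 := one_div_mul_le_left (Y := ‖ζ - z‖ ^ β)
          (Real.rpow_nonneg (norm_nonneg _) β) h23α hXc
        calc 1 / (‖ζ‖ ^ α * |Real.log ‖ζ‖| * ‖ζ - z‖ ^ β)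
            ≤ (1 / ((2/3:ℝ)*‖z‖)^α) / ‖ζ - z‖ ^ β := h2
          _ = c0 / ‖ζ - z‖ ^ β := by rw [hc0_def, one_div]
      have hsub : S ∩ A ⊆ ball z (min ‖z‖ 1) := by
        rintro ζ ⟨hζS, hζA⟩
        obtain ⟨ha0, harm, -⟩ := hAfact ζ hζA
        have hb : ‖ζ - z‖ < ‖ζ‖ / 2 := hζS
        have htr2 : ‖ζ‖ ≤ ‖ζ - z‖ + ‖z‖ := by
          have := norm_add_le (ζ - z) z
          simpa using this
        rw [mem_ball, dist_eq_norm]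
        exact lt_min (by linarith) (by linarith)
      calc (∫⁻ ζ in S ∩ A,
            ENNReal.ofReal (1 / (‖ζ‖ ^ α * |Real.log ‖ζ‖| * ‖ζ - z‖ ^ β)) ∂μ)
          ≤ ∫⁻ ζ in S ∩ A, ENNReal.ofReal (c0 / ‖ζ - z‖ ^ β) ∂μ :=
            setLIntegral_mono' (hSm.inter hAm) hpt
        _ ≤ ∫⁻ ζ in ball z (min ‖z‖ 1), ENNReal.ofReal (c0 / ‖ζ - z‖ ^ β) ∂μ :=
            lintegral_mono_set hsub
        _ ≤ ENNReal.ofReal (c0 * CA * (min ‖z‖ 1) ^ (2*(n:ℝ) - β)) :=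
            hCA μ H1 z _ c0 (lt_min hz0 one_pos) (min_le_right _ _) hc0p.le
        _ ≤ ENNReal.ofReal ((3/2:ℝ)^α * CA * ‖z‖ ^ (2*(n:ℝ) - α - β)) := by
            apply ENNReal.ofReal_le_ofReal
            have hminnn : (0:ℝ) ≤ min ‖z‖ 1 := le_min hz0.le one_pos.le
            have hmin : (min ‖z‖ 1) ^ (2*(n:ℝ)-β) ≤ ‖z‖ ^ (2*(n:ℝ)-β) :=
              Real.rpow_le_rpow hminnn (min_le_left _ _) (by linarith)
            have e1 : c0 = (3/2:ℝ)^α * ((‖z‖^α)⁻¹) := by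
              rw [hc0_def, Real.mul_rpow (by norm_num) hz0.le, mul_inv]
              congr 1
              rw [← Real.inv_rpow (by norm_num : (0:ℝ) ≤ 2/3)]
              norm_num
            have e2 : ‖z‖ ^ (2*(n:ℝ) - α - β) = (‖z‖^α)⁻¹ * ‖z‖ ^ (2*(n:ℝ) - β) := by
              rw [← Real.rpow_neg hz0.le, ← Real.rpow_add hz0]
              congr 1
              ring
            calc c0 * CA * (min ‖z‖ 1) ^ (2*(n:ℝ)-β)
                ≤ c0 * CA * ‖z‖ ^ (2*(n:ℝ)-β) :=
                  mul_le_mul_of_nonneg_left hmin (by positivity)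
              _ = (3/2:ℝ)^α * CA * ‖z‖ ^ (2*(n:ℝ) - α - β) := by
                  rw [e1, e2]; ring
    -- Region R2
    have hR2 : (∫⁻ ζ in Sᶜ ∩ A,
        ENNReal.ofReal (1 / (‖ζ‖ ^ α * |Real.log ‖ζ‖| * ‖ζ - z‖ ^ β)) ∂μ) ≤
        ENNReal.ofReal ((2:ℝ)^β * CB * rm ^ (2*(n:ℝ) - (α + β))) := by
      have hpt : ∀ ζ ∈ Sᶜ ∩ A,
          ENNReal.ofReal (1 / (‖ζ‖ ^ α * |Real.log ‖ζ‖| * ‖ζ - z‖ ^ β)) ≤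
          ENNReal.ofReal ((2:ℝ)^β / (‖ζ‖ ^ (α+β) * |Real.log ‖ζ‖|)) := by
        rintro ζ ⟨hζS, hζA⟩
        obtain ⟨ha0, harm, hL1⟩ := hAfact ζ hζA
        apply ENNReal.ofReal_le_ofReal
        have hb : ‖ζ‖ / 2 ≤ ‖ζ - z‖ := not_lt.mp hζS
        have hL0 : (0:ℝ) < |Real.log ‖ζ‖| := lt_of_lt_of_le one_pos hL1
        have hXp : (0:ℝ) < ‖ζ‖ ^ α * |Real.log ‖ζ‖| :=
          mul_pos (Real.rpow_pos_of_pos ha0 α) hL0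
        have hcp : (0:ℝ) < (‖ζ‖/2) ^ β := Real.rpow_pos_of_pos (by positivity) β
        have hbpow : (‖ζ‖/2) ^ β ≤ ‖ζ - z‖ ^ β :=
          Real.rpow_le_rpow (by positivity) hb hβ
        have h1 := one_div_mul_le_right hXp hcp hbpow
        have e3 : (1/((‖ζ‖/2:ℝ)^β))/(‖ζ‖^α * |Real.log ‖ζ‖|) =
            (2:ℝ)^β / (‖ζ‖^(α+β) * |Real.log ‖ζ‖|) := by
          rw [Real.div_rpow ha0.le (by norm_num : (0:ℝ) ≤ 2), Real.rpow_add ha0,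
            one_div_div, div_div]
          congr 1
          ring
        calc 1 / (‖ζ‖ ^ α * |Real.log ‖ζ‖| * ‖ζ - z‖ ^ β)
            ≤ (1/((‖ζ‖/2:ℝ)^β))/(‖ζ‖^α * |Real.log ‖ζ‖|) := h1
          _ = (2:ℝ)^β / (‖ζ‖^(α+β) * |Real.log ‖ζ‖|) := e3
      calc (∫⁻ ζ in Sᶜ ∩ A,
            ENNReal.ofReal (1 / (‖ζ‖ ^ α * |Real.log ‖ζ‖| * ‖ζ - z‖ ^ β)) ∂μ)
          ≤ ∫⁻ ζ in Sᶜ ∩ A,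
              ENNReal.ofReal ((2:ℝ)^β / (‖ζ‖ ^ (α+β) * |Real.log ‖ζ‖|)) ∂μ :=
            setLIntegral_mono' (hSm.compl.inter hAm) hpt
        _ ≤ ∫⁻ ζ in A ∩ ball 0 rm,
              ENNReal.ofReal ((2:ℝ)^β / (‖ζ‖ ^ (α+β) * |Real.log ‖ζ‖|)) ∂μ :=
            lintegral_mono_set (by rintro ζ ⟨-, hζA⟩; exact ⟨hζA, hζA.1⟩)
        _ ≤ ENNReal.ofReal ((2:ℝ)^β * CB * rm ^ (2*(n:ℝ) - (α + β))) :=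
            lemB n hn C₁ hC₁0 (α+β) (by linarith) hcase μ H1 m rm ((2:ℝ)^β)
              h2β.le hrm0 le_rfl
    refine ⟨fun _ => ?_, fun h => absurd (lt_of_lt_of_le h hcase) (lt_irrefl _)⟩
    have hcover : D ∩ A ⊆ (S ∩ A) ∪ (Sᶜ ∩ A) := by
      rintro ζ ⟨-, hζA⟩
      by_cases hζ : ζ ∈ S
      · exact Or.inl ⟨hζ, hζA⟩
      · exact Or.inr ⟨hζ, hζA⟩
    calc (∫⁻ ζ in D ∩ A,
          ENNReal.ofReal (1 / (‖ζ‖ ^ α * |Real.log ‖ζ‖| * ‖ζ - z‖ ^ β)) ∂μ)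
        ≤ ∫⁻ ζ in (S ∩ A) ∪ (Sᶜ ∩ A),
            ENNReal.ofReal (1 / (‖ζ‖ ^ α * |Real.log ‖ζ‖| * ‖ζ - z‖ ^ β)) ∂μ :=
          lintegral_mono_set hcover
      _ ≤ (∫⁻ ζ in S ∩ A,
            ENNReal.ofReal (1 / (‖ζ‖ ^ α * |Real.log ‖ζ‖| * ‖ζ - z‖ ^ β)) ∂μ) +
          ∫⁻ ζ in Sᶜ ∩ A,
            ENNReal.ofReal (1 / (‖ζ‖ ^ α * |Real.log ‖ζ‖| * ‖ζ - z‖ ^ β)) ∂μ :=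
          lintegral_union_le _ _ _
      _ ≤ ENNReal.ofReal ((3/2:ℝ)^α * CA * ‖z‖ ^ (2*(n:ℝ) - α - β)) +
          ENNReal.ofReal ((2:ℝ)^β * CB * rm ^ (2*(n:ℝ) - (α + β))) := add_le_add hR1 hR2
      _ = ENNReal.ofReal ((3/2:ℝ)^α * CA * ‖z‖ ^ (2*(n:ℝ) - α - β) +
            (2:ℝ)^β * CB * rm ^ (2*(n:ℝ) - (α + β))) := by
          rw [← ENNReal.ofReal_add (by positivity) (by positivity)]
      _ ≤ ENNReal.ofReal ((3/2:ℝ)^α * CA * Bm ^ (2*(n:ℝ)) + (2:ℝ)^β * CB) := by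
          apply ENNReal.ofReal_le_ofReal
          have hzc : ‖z‖ ^ (2*(n:ℝ) - α - β) ≤ Bm ^ (2*(n:ℝ)) := by
            calc ‖z‖ ^ (2*(n:ℝ) - α - β) ≤ Bm ^ (2*(n:ℝ) - α - β) :=
                  Real.rpow_le_rpow hz0.le hzBm (by linarith)
              _ ≤ Bm ^ (2*(n:ℝ)) :=
                  Real.rpow_le_rpow_of_exponent_le hBm1 (by linarith)
          have hrmc : rm ^ (2*(n:ℝ) - (α + β)) ≤ 1 :=
            Real.rpow_le_one hrm0.le hrmlt1.le (by linarith)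
          have t1 : (3/2:ℝ)^α * CA * ‖z‖ ^ (2*(n:ℝ) - α - β) ≤
              (3/2:ℝ)^α * CA * Bm ^ (2*(n:ℝ)) :=
            mul_le_mul_of_nonneg_left hzc (by positivity)
          have t2 : (2:ℝ)^β * CB * rm ^ (2*(n:ℝ) - (α + β)) ≤ (2:ℝ)^β * CB := by
            nlinarith [mul_pos h2β hCB0]
          linarith
  case inr =>
    refine ⟨(3/2:ℝ)^α * CA + (2:ℝ)^β * (2:ℝ)^(2*(n:ℝ)) * CB + (2:ℝ)^(2*(n:ℝ)) * CB,
      by positivity, ?_⟩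
    intro mE bE μ hμ D hD hDb hDd m z hzK hzne
    have H1 := hH1 μ hμ
    have hz0 : (0:ℝ) < ‖z‖ := norm_pos_iff.mpr hzne
    set rm : ℝ := Real.exp (-Real.exp (m : ℝ)) with hrm_def
    set rm1 : ℝ := Real.exp (-Real.exp ((m : ℝ) + 1)) with hrm1_def
    set A : Set (EuclideanSpace ℂ (Fin N)) := ball 0 rm \ closedBall 0 rm1 with hA_def
    have hrm0 : 0 < rm := Real.exp_pos _
    have hrmlt1 : rm < 1 := by
      rw [hrm_def, ← Real.exp_zero]
      apply Real.exp_lt_exp.mpr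
      have : (1:ℝ) ≤ Real.exp (m:ℝ) := Real.one_le_exp (Nat.cast_nonneg m)
      linarith
    have hAfact : ∀ ζ ∈ A, 0 < ‖ζ‖ ∧ ‖ζ‖ < rm ∧ 1 ≤ |Real.log ‖ζ‖| := by
      intro ζ hζ
      have h1 : rm1 < ‖ζ‖ := by
        have := hζ.2; rwa [mem_closedBall, dist_zero_right, not_le] at this
      have h2 : ‖ζ‖ < rm := by
        have := hζ.1; rwa [mem_ball, dist_zero_right] at this
      have h0 : 0 < ‖ζ‖ := (Real.exp_pos _).trans h1
      have hem : (1:ℝ) ≤ Real.exp (m:ℝ) := Real.one_le_exp (Nat.cast_nonneg m)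
      have hlog : Real.log ‖ζ‖ < -Real.exp (m:ℝ) := by
        have := Real.log_lt_log h0 h2
        rwa [hrm_def, Real.log_exp] at this
      refine ⟨h0, h2, ?_⟩
      calc (1:ℝ) ≤ Real.exp (m:ℝ) := hem
        _ ≤ -Real.log ‖ζ‖ := by linarith
        _ ≤ |Real.log ‖ζ‖| := neg_le_abs _
    set S : Set (EuclideanSpace ℂ (Fin N)) := {ζ | ‖ζ - z‖ < ‖ζ‖ / 2} with hS_def
    have hSm : MeasurableSet S :=
      measurableSet_lt ((continuous_id.sub continuous_const).norm.measurable)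
        (continuous_norm.measurable.div_const 2)
    set P : Set (EuclideanSpace ℂ (Fin N)) := {ζ | ‖z‖ / 2 ≤ ‖ζ‖} with hP_def
    have hPm : MeasurableSet P :=
      measurableSet_le measurable_const continuous_norm.measurable
    have hAm : MeasurableSet A := measurableSet_ball.diff measurableSet_closedBall
    set Z : ℝ := ‖z‖ ^ (2 * (n:ℝ) - α - β) with hZ_def
    have hZ0 : 0 < Z := Real.rpow_pos_of_pos hz0 _
    -- identity: (‖z‖/2) ^ (2n - (α+β)) ≤ 2^(2n) * Z
    have hkey : (‖z‖/2:ℝ) ^ (2*(n:ℝ) - (α+β)) ≤ (2:ℝ)^(2*(n:ℝ)) * Z := by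
      have e4 : (‖z‖/2:ℝ) ^ (2*(n:ℝ) - (α+β)) =
          Z * ((2:ℝ) ^ (2*(n:ℝ) - (α+β)))⁻¹ := by
        rw [Real.div_rpow hz0.le (by norm_num : (0:ℝ) ≤ 2), div_eq_mul_inv, hZ_def]
        congr 2
        ring_nf
      have e5 : ((2:ℝ) ^ (2*(n:ℝ) - (α+β)))⁻¹ = (2:ℝ) ^ ((α+β) - 2*(n:ℝ)) := by
        rw [← Real.rpow_neg (by norm_num : (0:ℝ) ≤ 2)]
        congr 1
        ring
      have e6 : (2:ℝ) ^ ((α+β) - 2*(n:ℝ)) ≤ (2:ℝ) ^ (2*(n:ℝ)) := by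
        apply Real.rpow_le_rpow_of_exponent_le one_le_two
        linarith
      calc (‖z‖/2:ℝ) ^ (2*(n:ℝ) - (α+β)) = Z * (2:ℝ) ^ ((α+β) - 2*(n:ℝ)) := by
            rw [e4, e5]
        _ ≤ Z * (2:ℝ) ^ (2*(n:ℝ)) := mul_le_mul_of_nonneg_left e6 hZ0.le
        _ = (2:ℝ)^(2*(n:ℝ)) * Z := mul_comm _ _
    -- Region R1
    have hR1 : (∫⁻ ζ in S ∩ A,
        ENNReal.ofReal (1 / (‖ζ‖ ^ α * |Real.log ‖ζ‖| * ‖ζ - z‖ ^ β)) ∂μ) ≤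
        ENNReal.ofReal ((3/2:ℝ)^α * CA * Z) := by
      set c0 : ℝ := (((2/3:ℝ) * ‖z‖) ^ α)⁻¹ with hc0_def
      have h23 : (0:ℝ) < (2/3:ℝ) * ‖z‖ := by positivity
      have h23α : (0:ℝ) < ((2/3:ℝ) * ‖z‖) ^ α := Real.rpow_pos_of_pos h23 α
      have hc0p : 0 < c0 := by rw [hc0_def]; positivity
      have hpt : ∀ ζ ∈ S ∩ A,
          ENNReal.ofReal (1 / (‖ζ‖ ^ α * |Real.log ‖ζ‖| * ‖ζ - z‖ ^ β)) ≤
          ENNReal.ofReal (c0 / ‖ζ - z‖ ^ β) := by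
        rintro ζ ⟨hζS, hζA⟩
        obtain ⟨ha0, harm, hL1⟩ := hAfact ζ hζA
        apply ENNReal.ofReal_le_ofReal
        have hb : ‖ζ - z‖ < ‖ζ‖ / 2 := hζS
        have htr : ‖z‖ ≤ ‖ζ‖ + ‖ζ - z‖ := by
          have := norm_sub_le ζ (ζ - z)
          simpa using this
        have hza : (2/3:ℝ) * ‖z‖ < ‖ζ‖ := by linarith
        have hXc : ((2/3:ℝ)*‖z‖)^α ≤ ‖ζ‖^α * |Real.log ‖ζ‖| := by
          have h1 : ((2/3:ℝ)*‖z‖)^α ≤ ‖ζ‖^α := Real.rpow_le_rpow h23.le hza.le hα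
          calc ((2/3:ℝ)*‖z‖)^α ≤ ‖ζ‖^α := h1
            _ = ‖ζ‖^α * 1 := (mul_one _).symm
            _ ≤ ‖ζ‖^α * |Real.log ‖ζ‖| :=
                mul_le_mul_of_nonneg_left hL1 (Real.rpow_pos_of_pos ha0 α).le
        have h2 := one_div_mul_le_left (Y := ‖ζ - z‖ ^ β)
          (Real.rpow_nonneg (norm_nonneg _) β) h23α hXc
        calc 1 / (‖ζ‖ ^ α * |Real.log ‖ζ‖| * ‖ζ - z‖ ^ β)
            ≤ (1 / ((2/3:ℝ)*‖z‖)^α) / ‖ζ - z‖ ^ β := h2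
          _ = c0 / ‖ζ - z‖ ^ β := by rw [hc0_def, one_div]
      have hsub : S ∩ A ⊆ ball z (min ‖z‖ 1) := by
        rintro ζ ⟨hζS, hζA⟩
        obtain ⟨ha0, harm, -⟩ := hAfact ζ hζA
        have hb : ‖ζ - z‖ < ‖ζ‖ / 2 := hζS
        have htr2 : ‖ζ‖ ≤ ‖ζ - z‖ + ‖z‖ := by
          have := norm_add_le (ζ - z) z
          simpa using this
        rw [mem_ball, dist_eq_norm]
        exact lt_min (by linarith) (by linarith)
      calc (∫⁻ ζ in S ∩ A,
            ENNReal.ofReal (1 / (‖ζ‖ ^ α * |Real.log ‖ζ‖| * ‖ζ - z‖ ^ β)) ∂μ)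
          ≤ ∫⁻ ζ in S ∩ A, ENNReal.ofReal (c0 / ‖ζ - z‖ ^ β) ∂μ :=
            setLIntegral_mono' (hSm.inter hAm) hpt
        _ ≤ ∫⁻ ζ in ball z (min ‖z‖ 1), ENNReal.ofReal (c0 / ‖ζ - z‖ ^ β) ∂μ :=
            lintegral_mono_set hsub
        _ ≤ ENNReal.ofReal (c0 * CA * (min ‖z‖ 1) ^ (2*(n:ℝ) - β)) :=
            hCA μ H1 z _ c0 (lt_min hz0 one_pos) (min_le_right _ _) hc0p.le
        _ ≤ ENNReal.ofReal ((3/2:ℝ)^α * CA * Z) := by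
            apply ENNReal.ofReal_le_ofReal
            have hminnn : (0:ℝ) ≤ min ‖z‖ 1 := le_min hz0.le one_pos.le
            have hmin : (min ‖z‖ 1) ^ (2*(n:ℝ)-β) ≤ ‖z‖ ^ (2*(n:ℝ)-β) :=
              Real.rpow_le_rpow hminnn (min_le_left _ _) (by linarith)
            have e1 : c0 = (3/2:ℝ)^α * ((‖z‖^α)⁻¹) := by
              rw [hc0_def, Real.mul_rpow (by norm_num) hz0.le, mul_inv]
              congr 1
              rw [← Real.inv_rpow (by norm_num : (0:ℝ) ≤ 2/3)]
              norm_num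
            have e2 : Z = (‖z‖^α)⁻¹ * ‖z‖ ^ (2*(n:ℝ) - β) := by
              rw [hZ_def, ← Real.rpow_neg hz0.le, ← Real.rpow_add hz0]
              congr 1
              ring
            calc c0 * CA * (min ‖z‖ 1) ^ (2*(n:ℝ)-β)
                ≤ c0 * CA * ‖z‖ ^ (2*(n:ℝ)-β) :=
                  mul_le_mul_of_nonneg_left hmin (by positivity)
              _ = (3/2:ℝ)^α * CA * Z := by rw [e1, e2]; ring
    -- Region R2a : ‖z‖/2 ≤ ‖ζ‖
    have hR2a : (∫⁻ ζ in (Sᶜ ∩ P) ∩ A,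
        ENNReal.ofReal (1 / (‖ζ‖ ^ α * |Real.log ‖ζ‖| * ‖ζ - z‖ ^ β)) ∂μ) ≤
        ENNReal.ofReal ((2:ℝ)^β * (2:ℝ)^(2*(n:ℝ)) * CB * Z) := by
      set c0a : ℝ := (2:ℝ)^β * (‖z‖/2:ℝ) ^ (2*(n:ℝ) - (α+β)) with hc0a_def
      have hz2 : (0:ℝ) < ‖z‖/2 := by positivity
      have hc0a0 : 0 ≤ c0a := by
        have := Real.rpow_pos_of_pos hz2 (2*(n:ℝ) - (α+β))
        positivity
      have hpt : ∀ ζ ∈ (Sᶜ ∩ P) ∩ A,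
          ENNReal.ofReal (1 / (‖ζ‖ ^ α * |Real.log ‖ζ‖| * ‖ζ - z‖ ^ β)) ≤
          ENNReal.ofReal (c0a / (‖ζ‖ ^ (2*(n:ℝ)) * |Real.log ‖ζ‖|)) := by
        rintro ζ ⟨⟨hζS, hζP⟩, hζA⟩
        obtain ⟨ha0, harm, hL1⟩ := hAfact ζ hζA
        apply ENNReal.ofReal_le_ofReal
        have hb : ‖ζ‖ / 2 ≤ ‖ζ - z‖ := not_lt.mp hζS
        have hzha : ‖z‖/2 ≤ ‖ζ‖ := hζP
        have hL0 : (0:ℝ) < |Real.log ‖ζ‖| := lt_of_lt_of_le one_pos hL1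
        have hXp : (0:ℝ) < ‖ζ‖ ^ α * |Real.log ‖ζ‖| :=
          mul_pos (Real.rpow_pos_of_pos ha0 α) hL0
        have hcp : (0:ℝ) < (‖ζ‖/2) ^ β := Real.rpow_pos_of_pos (by positivity) β
        have hbpow : (‖ζ‖/2) ^ β ≤ ‖ζ - z‖ ^ β :=
          Real.rpow_le_rpow (by positivity) hb hβ
        have h1 := one_div_mul_le_right hXp hcp hbpow
        have e3 : (1/((‖ζ‖/2:ℝ)^β))/(‖ζ‖^α * |Real.log ‖ζ‖|) =
            (2:ℝ)^β / (‖ζ‖^(α+β) * |Real.log ‖ζ‖|) := by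
          rw [Real.div_rpow ha0.le (by norm_num : (0:ℝ) ≤ 2), Real.rpow_add ha0,
            one_div_div, div_div]
          congr 1
          ring
        have hsplit : ‖ζ‖ ^ (α+β) = ‖ζ‖ ^ (2*(n:ℝ)) * ‖ζ‖ ^ ((α+β) - 2*(n:ℝ)) := by
          rw [← Real.rpow_add ha0]
          congr 1
          ring
        have h4 : (‖z‖/2:ℝ) ^ ((α+β) - 2*(n:ℝ)) ≤ ‖ζ‖ ^ ((α+β) - 2*(n:ℝ)) :=
          Real.rpow_le_rpow hz2.le hzha (by linarith)
        have h5 : (0:ℝ) < ‖ζ‖ ^ (2*(n:ℝ)) := Real.rpow_pos_of_pos ha0 _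
        have h6 : (0:ℝ) < (‖z‖/2:ℝ) ^ ((α+β) - 2*(n:ℝ)) := Real.rpow_pos_of_pos hz2 _
        have h7 : ‖ζ‖ ^ (2*(n:ℝ)) * (‖z‖/2:ℝ) ^ ((α+β) - 2*(n:ℝ)) * |Real.log ‖ζ‖| ≤
            ‖ζ‖ ^ (α+β) * |Real.log ‖ζ‖| := by
          rw [hsplit]
          apply mul_le_mul_of_nonneg_right _ hL0.le
          exact mul_le_mul_of_nonneg_left h4 h5.le
        have h8 : (2:ℝ)^β / (‖ζ‖^(α+β) * |Real.log ‖ζ‖|) ≤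
            (2:ℝ)^β / (‖ζ‖ ^ (2*(n:ℝ)) * (‖z‖/2:ℝ) ^ ((α+β) - 2*(n:ℝ)) * |Real.log ‖ζ‖|) := by
          rw [div_eq_mul_inv, div_eq_mul_inv]
          refine mul_le_mul_of_nonneg_left (inv_anti₀ (by positivity) h7) h2β.le
        have e9 : (2:ℝ)^β / (‖ζ‖ ^ (2*(n:ℝ)) * (‖z‖/2:ℝ) ^ ((α+β) - 2*(n:ℝ)) * |Real.log ‖ζ‖|)
            = c0a / (‖ζ‖ ^ (2*(n:ℝ)) * |Real.log ‖ζ‖|) := by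
          rw [hc0a_def]
          have e10 : (‖z‖/2:ℝ) ^ (2*(n:ℝ) - (α+β)) = ((‖z‖/2:ℝ) ^ ((α+β) - 2*(n:ℝ)))⁻¹ := by
            rw [← Real.rpow_neg hz2.le]
            congr 1
            ring
          rw [e10]
          field_simp
          try ring
          try tauto
        calc 1 / (‖ζ‖ ^ α * |Real.log ‖ζ‖| * ‖ζ - z‖ ^ β)
            ≤ (1/((‖ζ‖/2:ℝ)^β))/(‖ζ‖^α * |Real.log ‖ζ‖|) := h1
          _ = (2:ℝ)^β / (‖ζ‖^(α+β) * |Real.log ‖ζ‖|) := e3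
          _ ≤ (2:ℝ)^β / (‖ζ‖ ^ (2*(n:ℝ)) * (‖z‖/2:ℝ) ^ ((α+β) - 2*(n:ℝ)) *
                |Real.log ‖ζ‖|) := h8
          _ = c0a / (‖ζ‖ ^ (2*(n:ℝ)) * |Real.log ‖ζ‖|) := e9
      calc (∫⁻ ζ in (Sᶜ ∩ P) ∩ A,
            ENNReal.ofReal (1 / (‖ζ‖ ^ α * |Real.log ‖ζ‖| * ‖ζ - z‖ ^ β)) ∂μ)
          ≤ ∫⁻ ζ in (Sᶜ ∩ P) ∩ A,
              ENNReal.ofReal (c0a / (‖ζ‖ ^ (2*(n:ℝ)) * |Real.log ‖ζ‖|)) ∂μ :=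
            setLIntegral_mono' ((hSm.compl.inter hPm).inter hAm) hpt
        _ ≤ ∫⁻ ζ in A ∩ ball 0 rm,
              ENNReal.ofReal (c0a / (‖ζ‖ ^ (2*(n:ℝ)) * |Real.log ‖ζ‖|)) ∂μ :=
            lintegral_mono_set (by rintro ζ ⟨-, hζA⟩; exact ⟨hζA, hζA.1⟩)
        _ ≤ ENNReal.ofReal (c0a * CB * rm ^ (2*(n:ℝ) - 2*(n:ℝ))) :=
            lemB n hn C₁ hC₁0 (2*(n:ℝ)) (by positivity) le_rfl μ H1 m rm c0a
              hc0a0 hrm0 le_rfl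
        _ ≤ ENNReal.ofReal ((2:ℝ)^β * (2:ℝ)^(2*(n:ℝ)) * CB * Z) := by
            apply ENNReal.ofReal_le_ofReal
            have e11 : (2*(n:ℝ) - 2*(n:ℝ)) = 0 := by ring
            rw [e11, Real.rpow_zero, mul_one, hc0a_def]
            have h12 : (2:ℝ)^β * (‖z‖/2:ℝ) ^ (2*(n:ℝ) - (α+β)) * CB ≤
                (2:ℝ)^β * ((2:ℝ)^(2*(n:ℝ)) * Z) * CB :=
              mul_le_mul_of_nonneg_right
                (mul_le_mul_of_nonneg_left hkey h2β.le) hCB0.le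
            calc (2:ℝ)^β * (‖z‖/2:ℝ) ^ (2*(n:ℝ) - (α+β)) * CB
                ≤ (2:ℝ)^β * ((2:ℝ)^(2*(n:ℝ)) * Z) * CB := h12
              _ = (2:ℝ)^β * (2:ℝ)^(2*(n:ℝ)) * CB * Z := by ring
    -- Region R2b : ‖ζ‖ < ‖z‖/2
    have hR2b : (∫⁻ ζ in (Sᶜ ∩ Pᶜ) ∩ A,
        ENNReal.ofReal (1 / (‖ζ‖ ^ α * |Real.log ‖ζ‖| * ‖ζ - z‖ ^ β)) ∂μ) ≤
        ENNReal.ofReal ((2:ℝ)^(2*(n:ℝ)) * CB * Z) := by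
      set c0b : ℝ := ((‖z‖/2:ℝ) ^ β)⁻¹ with hc0b_def
      have hz2 : (0:ℝ) < ‖z‖/2 := by positivity
      have hz2β : (0:ℝ) < (‖z‖/2:ℝ) ^ β := Real.rpow_pos_of_pos hz2 β
      have hc0b0 : 0 ≤ c0b := by rw [hc0b_def]; positivity
      have hpt : ∀ ζ ∈ (Sᶜ ∩ Pᶜ) ∩ A,
          ENNReal.ofReal (1 / (‖ζ‖ ^ α * |Real.log ‖ζ‖| * ‖ζ - z‖ ^ β)) ≤
          ENNReal.ofReal (c0b / (‖ζ‖ ^ α * |Real.log ‖ζ‖|)) := by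
        rintro ζ ⟨⟨hζS, hζP⟩, hζA⟩
        obtain ⟨ha0, harm, hL1⟩ := hAfact ζ hζA
        apply ENNReal.ofReal_le_ofReal
        have hPa : ‖ζ‖ < ‖z‖/2 := not_le.mp hζP
        have htr : ‖z‖ ≤ ‖ζ‖ + ‖ζ - z‖ := by
          have := norm_sub_le ζ (ζ - z)
          simpa using this
        have hbz : ‖z‖/2 ≤ ‖ζ - z‖ := by linarith
        have hbpow : (‖z‖/2:ℝ) ^ β ≤ ‖ζ - z‖ ^ β :=
          Real.rpow_le_rpow hz2.le hbz hβ
        have hL0 : (0:ℝ) < |Real.log ‖ζ‖| := lt_of_lt_of_le one_pos hL1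
        have hXp : (0:ℝ) < ‖ζ‖ ^ α * |Real.log ‖ζ‖| :=
          mul_pos (Real.rpow_pos_of_pos ha0 α) hL0
        have h1 := one_div_mul_le_right hXp hz2β hbpow
        calc 1 / (‖ζ‖ ^ α * |Real.log ‖ζ‖| * ‖ζ - z‖ ^ β)
            ≤ (1/((‖z‖/2:ℝ)^β))/(‖ζ‖^α * |Real.log ‖ζ‖|) := h1
          _ = c0b / (‖ζ‖ ^ α * |Real.log ‖ζ‖|) := by rw [hc0b_def, one_div]
      have hsub : (Sᶜ ∩ Pᶜ) ∩ A ⊆ A ∩ ball 0 (min (‖z‖/2) rm) := by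
        rintro ζ ⟨⟨-, hζP⟩, hζA⟩
        obtain ⟨ha0, harm, -⟩ := hAfact ζ hζA
        have hPa : ‖ζ‖ < ‖z‖/2 := not_le.mp hζP
        exact ⟨hζA, by rw [mem_ball, dist_zero_right]; exact lt_min hPa harm⟩
      calc (∫⁻ ζ in (Sᶜ ∩ Pᶜ) ∩ A,
            ENNReal.ofReal (1 / (‖ζ‖ ^ α * |Real.log ‖ζ‖| * ‖ζ - z‖ ^ β)) ∂μ)
          ≤ ∫⁻ ζ in (Sᶜ ∩ Pᶜ) ∩ A,
              ENNReal.ofReal (c0b / (‖ζ‖ ^ α * |Real.log ‖ζ‖|)) ∂μ :=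
            setLIntegral_mono' ((hSm.compl.inter hPm.compl).inter hAm) hpt
        _ ≤ ∫⁻ ζ in A ∩ ball 0 (min (‖z‖/2) rm),
              ENNReal.ofReal (c0b / (‖ζ‖ ^ α * |Real.log ‖ζ‖|)) ∂μ :=
            lintegral_mono_set hsub
        _ ≤ ENNReal.ofReal (c0b * CB * (min (‖z‖/2) rm) ^ (2*(n:ℝ) - α)) :=
            lemB n hn C₁ hC₁0 α hα hα' μ H1 m (min (‖z‖/2) rm) c0b hc0b0
              (lt_min hz2 hrm0) (min_le_right _ _)
        _ ≤ ENNReal.ofReal ((2:ℝ)^(2*(n:ℝ)) * CB * Z) := by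
            apply ENNReal.ofReal_le_ofReal
            have hminnn : (0:ℝ) ≤ min (‖z‖/2) rm := le_min hz2.le hrm0.le
            have hmin : (min (‖z‖/2) rm) ^ (2*(n:ℝ) - α) ≤ (‖z‖/2:ℝ) ^ (2*(n:ℝ) - α) :=
              Real.rpow_le_rpow hminnn (min_le_left _ _) (by linarith)
            have e12 : c0b * (‖z‖/2:ℝ) ^ (2*(n:ℝ) - α) =
                (‖z‖/2:ℝ) ^ (2*(n:ℝ) - (α+β)) := by
              rw [hc0b_def, ← Real.rpow_neg hz2.le, ← Real.rpow_add hz2]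
              congr 1
              ring
            calc c0b * CB * (min (‖z‖/2) rm) ^ (2*(n:ℝ) - α)
                ≤ c0b * CB * (‖z‖/2:ℝ) ^ (2*(n:ℝ) - α) :=
                  mul_le_mul_of_nonneg_left hmin (by positivity)
              _ = (‖z‖/2:ℝ) ^ (2*(n:ℝ) - (α+β)) * CB := by
                  rw [← e12]; ring
              _ ≤ ((2:ℝ)^(2*(n:ℝ)) * Z) * CB :=
                  mul_le_mul_of_nonneg_right hkey hCB0.le
              _ = (2:ℝ)^(2*(n:ℝ)) * CB * Z := by ring
    refine ⟨fun h => absurd (lt_of_lt_of_le hcase h) (lt_irrefl _), fun _ => ?_⟩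
    have hcover : D ∩ A ⊆ (S ∩ A) ∪ (((Sᶜ ∩ P) ∩ A) ∪ ((Sᶜ ∩ Pᶜ) ∩ A)) := by
      rintro ζ ⟨-, hζA⟩
      by_cases hζ : ζ ∈ S
      · exact Or.inl ⟨hζ, hζA⟩
      · by_cases hζ' : ζ ∈ P
        · exact Or.inr (Or.inl ⟨⟨hζ, hζ'⟩, hζA⟩)
        · exact Or.inr (Or.inr ⟨⟨hζ, hζ'⟩, hζA⟩)
    calc (∫⁻ ζ in D ∩ A,
          ENNReal.ofReal (1 / (‖ζ‖ ^ α * |Real.log ‖ζ‖| * ‖ζ - z‖ ^ β)) ∂μ)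
        ≤ ∫⁻ ζ in (S ∩ A) ∪ (((Sᶜ ∩ P) ∩ A) ∪ ((Sᶜ ∩ Pᶜ) ∩ A)),
            ENNReal.ofReal (1 / (‖ζ‖ ^ α * |Real.log ‖ζ‖| * ‖ζ - z‖ ^ β)) ∂μ :=
          lintegral_mono_set hcover
      _ ≤ (∫⁻ ζ in S ∩ A,
            ENNReal.ofReal (1 / (‖ζ‖ ^ α * |Real.log ‖ζ‖| * ‖ζ - z‖ ^ β)) ∂μ) +
          ((∫⁻ ζ in (Sᶜ ∩ P) ∩ A,
            ENNReal.ofReal (1 / (‖ζ‖ ^ α * |Real.log ‖ζ‖| * ‖ζ - z‖ ^ β)) ∂μ) +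
           ∫⁻ ζ in (Sᶜ ∩ Pᶜ) ∩ A,
            ENNReal.ofReal (1 / (‖ζ‖ ^ α * |Real.log ‖ζ‖| * ‖ζ - z‖ ^ β)) ∂μ) := by
          refine (lintegral_union_le _ _ _).trans ?_
          exact add_le_add le_rfl (lintegral_union_le _ _ _)
      _ ≤ ENNReal.ofReal ((3/2:ℝ)^α * CA * Z) +
          (ENNReal.ofReal ((2:ℝ)^β * (2:ℝ)^(2*(n:ℝ)) * CB * Z) +
           ENNReal.ofReal ((2:ℝ)^(2*(n:ℝ)) * CB * Z)) :=
          add_le_add hR1 (add_le_add hR2a hR2b)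
      _ = ENNReal.ofReal ((3/2:ℝ)^α * CA * Z +
          ((2:ℝ)^β * (2:ℝ)^(2*(n:ℝ)) * CB * Z + (2:ℝ)^(2*(n:ℝ)) * CB * Z)) := by
          rw [← ENNReal.ofReal_add (by positivity) (by positivity),
            ← ENNReal.ofReal_add (by positivity) (by positivity)]
      _ ≤ ENNReal.ofReal (((3/2:ℝ)^α * CA + (2:ℝ)^β * (2:ℝ)^(2*(n:ℝ)) * CB +
            (2:ℝ)^(2*(n:ℝ)) * CB) * ‖z‖ ^ (2 * (n:ℝ) - α - β)) := by
          apply ENNReal.ofReal_le_ofReal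
          rw [hZ_def]
          ring_nf
          exact le_rfl
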